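/- Let G be a connected R-graph (finite connected graph with positive real edge weights p_{ij}) and D a real divisor on G. Then h^0(D) - h^0(K - D) = deg(D) + 1 - g, where K = Σ_i (deg(v_i) - 2)·v_i and g = Σ_{i<j} p_{ij} - n + 1. -/

import Mathlib

/-- The weighted Laplacian of the weighted graph `p`. -/
def lap {n : ℕ} (p : Fin n → Fin n → ℝ) : Fin n → Fin n → ℝ :=
  fun i j => if i = j then ∑ l ∈ Finset.univ.erase i, p i l else -(p i j)

/-- Nonemptiness of the linear system `|D|`. -/
def LSNonempty {n : ℕ} (p : Fin n → Fin n → ℝ) (D : Fin n → ℝ) : Prop :=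
  ∃ m : Fin n → ℤ, ∀ i, D i + ∑ j, (m j : ℝ) * lap p i j > -1

/-- `h⁰(D)`: the minimum of `deg(E)` over effective divisors `E` with `|D - E| = ∅`. -/
noncomputable def h0 {n : ℕ} (p : Fin n → Fin n → ℝ) (D : Fin n → ℝ) : ℝ :=
  sInf {d : ℝ | ∃ E : Fin n → ℝ, (∀ i, 0 ≤ E i) ∧ ¬ LSNonempty p (D - E) ∧ d = ∑ i, E i}

/-- The canonical divisor `K = Σ (deg(v_i) - 2)·v_i`. -/
def canon {n : ℕ} (p : Fin n → Fin n → ℝ) : Fin n → ℝ :=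
  fun i => (∑ j ∈ Finset.univ.erase i, p i j) - 2

/-- The genus `g = Σ_{i<j} p_{ij} - n + 1`. -/
def genus {n : ℕ} (p : Fin n → Fin n → ℝ) : ℝ :=
  (∑ ij ∈ Finset.univ.filter (fun ij : Fin n × Fin n => ij.1 < ij.2), p ij.1 ij.2) - n + 1

open Finset Function

namespace RR
variable {n : ℕ} (p : Fin n → Fin n → ℝ)

/-- real Laplacian action -/
def Lr (v : Fin n → ℝ) : Fin n → ℝ := fun i => ∑ j, v j * lap p i j

lemma Lr_alt (v : Fin n → ℝ) (i : Fin n) :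
    Lr p v i = ∑ j, p i j * (v i - v j) := by
  have h0 : Lr p v i = (∑ j ∈ Finset.univ.erase i, v j * lap p i j) + v i * lap p i i :=
    (Finset.sum_erase_add _ _ (Finset.mem_univ i)).symm
  have h1 : (∑ j, p i j * (v i - v j)) = ∑ j ∈ Finset.univ.erase i, p i j * (v i - v j) := by
    rw [← Finset.sum_erase_add _ _ (Finset.mem_univ i)]
    simp
  rw [h0, h1]
  have h2 : lap p i i = ∑ l ∈ Finset.univ.erase i, p i l := by simp [lap]
  have h3 : ∀ j ∈ Finset.univ.erase i, v j * lap p i j = -(p i j * v j) := by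
    intro j hj
    have hji : j ≠ i := Finset.ne_of_mem_erase hj
    simp [lap, Ne.symm hji]
    ring
  rw [Finset.sum_congr rfl h3, h2, Finset.mul_sum]
  rw [← Finset.sum_add_distrib]
  apply Finset.sum_congr rfl
  intro j _
  ring

lemma Lr_sub (v w : Fin n → ℝ) (i : Fin n) :
    Lr p (v - w) i = Lr p v i - Lr p w i := by
  unfold Lr
  rw [← Finset.sum_sub_distrib]
  apply Finset.sum_congr rfl
  intro j _
  simp [Pi.sub_apply]
  ring

lemma lap_symm (hsym : ∀ i j, p i j = p j i) (i j : Fin n) : lap p i j = lap p j i := by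
  unfold lap
  rcases eq_or_ne i j with h | h
  · subst h; rfl
  · rw [if_neg h, if_neg (Ne.symm h), hsym]

lemma sum_Lr (hsym : ∀ i j, p i j = p j i) (v : Fin n → ℝ) :
    ∑ i, Lr p v i = 0 := by
  have h : ∑ i, Lr p v i = ∑ i, ∑ j, p i j * (v i - v j) := by
    exact Finset.sum_congr rfl fun i _ => Lr_alt p v i
  rw [h]
  have h2 : ∑ i, ∑ j, p i j * v i = ∑ i, ∑ j, p i j * v j := by
    rw [Finset.sum_comm]
    apply Finset.sum_congr rfl; intro i _
    apply Finset.sum_congr rfl; intro j _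
    rw [hsym]
  simp only [mul_sub, Finset.sum_sub_distrib]
  linarith [h2]

lemma bilin_symm (hsym : ∀ i j, p i j = p j i) (v w : Fin n → ℝ) :
    ∑ i, v i * Lr p w i = ∑ i, w i * Lr p v i := by
  unfold Lr
  simp only [Finset.mul_sum]
  rw [Finset.sum_comm]
  apply Finset.sum_congr rfl; intro i _
  apply Finset.sum_congr rfl; intro j _
  rw [lap_symm p hsym]
  ring

end RR

-- appended to base.lean namespace RR
namespace RR
open Module
variable {n : ℕ} (p : Fin n → Fin n → ℝ)

lemma row_sum (i : Fin n) : ∑ j, lap p i j = 0 := by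
  rw [← Finset.sum_erase_add _ _ (Finset.mem_univ i)]
  have h : ∀ j ∈ Finset.univ.erase i, lap p i j = -(p i j) := by
    intro j hj
    simp [lap, Ne.symm (Finset.ne_of_mem_erase hj)]
  rw [Finset.sum_congr rfl h]
  simp [lap]

/-- the Laplacian as a linear map -/
def LMap : (Fin n → ℝ) →ₗ[ℝ] (Fin n → ℝ) where
  toFun := Lr p
  map_add' := by
    intro v w; funext i
    show Lr p (v + w) i = Lr p v i + Lr p w i
    unfold Lr
    rw [← Finset.sum_add_distrib]
    exact Finset.sum_congr rfl fun j _ => by simp [add_mul]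
  map_smul' := by
    intro a v; funext i
    show Lr p (a • v) i = a * Lr p v i
    unfold Lr
    simp only [RingHom.id_apply, Pi.smul_apply, smul_eq_mul, Finset.mul_sum]
    exact Finset.sum_congr rfl fun j _ => by ring

lemma ker_const (hn : 0 < n) (hnn : ∀ i j, 0 ≤ p i j)
    (hconn : ∀ i j : Fin n, Relation.ReflTransGen (fun a b => 0 < p a b) i j)
    (v : Fin n → ℝ) (hv : ∀ i, Lr p v i = 0) : ∃ c : ℝ, v = fun _ => c := by
  obtain ⟨i₀, -, hmax⟩ := Finset.exists_max_image Finset.univ v ⟨⟨0, hn⟩, Finset.mem_univ _⟩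
  refine ⟨v i₀, funext fun j => ?_⟩
  have key : ∀ a b : Fin n, v a = v i₀ → 0 < p a b → v b = v i₀ := by
    intro a b ha hpab
    have h1 : ∑ k, p a k * (v a - v k) = 0 := by rw [← Lr_alt]; exact hv a
    have h2 : ∀ k ∈ Finset.univ, 0 ≤ p a k * (v a - v k) := by
      intro k _
      have := hmax k (Finset.mem_univ k)
      have := hnn a k
      nlinarith [hmax k (Finset.mem_univ k)]
    have h3 := (Finset.sum_eq_zero_iff_of_nonneg h2).mp h1 b (Finset.mem_univ b)
    have h4 : v a - v b = 0 := by
      rcases mul_eq_zero.mp h3 with h | h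
      · exact absurd h (ne_of_gt hpab)
      · exact h
    have := hmax b (Finset.mem_univ b)
    linarith [hmax b (Finset.mem_univ b)]
  have hrtg := hconn i₀ j
  induction hrtg with
  | refl => rfl
  | tail hab hrel ih => exact key _ _ ih hrel

lemma exists_posvec (hn : 0 < n) (hsym : ∀ i j, p i j = p j i) (hnn : ∀ i j, 0 ≤ p i j)
    (hconn : ∀ i j : Fin n, Relation.ReflTransGen (fun a b => 0 < p a b) i j)
    (q : Fin n) :
    ∃ b : Fin n → ℤ, ∀ i, i ≠ q → 0 < Lr p (fun j => (b j : ℝ)) i := by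
  -- the sum functional
  set ℓ : (Fin n → ℝ) →ₗ[ℝ] ℝ := ∑ i, LinearMap.proj i with hℓ
  have hℓapp : ∀ v : Fin n → ℝ, ℓ v = ∑ i, v i := by
    intro v; simp [hℓ, LinearMap.sum_apply]
  -- kernel of LMap is the constants
  have hker : LinearMap.ker (LMap p) = Submodule.span ℝ {(1 : Fin n → ℝ)} := by
    apply le_antisymm
    · intro v hv
      have hv' : ∀ i, Lr p v i = 0 := by
        intro i
        have : LMap p v = 0 := hv
        exact congrFun this i
      obtain ⟨c, hc⟩ := ker_const p hn hnn hconn v hv'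
      rw [Submodule.mem_span_singleton]
      exact ⟨c, by funext i; simp [hc]⟩
    · rw [Submodule.span_le, Set.singleton_subset_iff]
      show LMap p 1 = 0
      funext i
      show Lr p 1 i = 0
      unfold Lr
      simpa using row_sum p i
  have hone : (1 : Fin n → ℝ) ≠ 0 := by
    intro h
    have := congrFun h ⟨0, hn⟩
    norm_num at this
  have hdimker : finrank ℝ (LinearMap.ker (LMap p)) = 1 := by
    rw [hker]; exact finrank_span_singleton hone
  have hrn := LinearMap.finrank_range_add_finrank_ker (LMap p)
  have hpi : finrank ℝ (Fin n → ℝ) = n := by simp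
  -- ℓ is surjective
  have hℓsurj : LinearMap.range ℓ = ⊤ := by
    rw [LinearMap.range_eq_top]
    intro x
    refine ⟨fun _ => x / n, ?_⟩
    rw [hℓapp]
    simp only [Finset.sum_const, Finset.card_univ, Fintype.card_fin, nsmul_eq_mul]
    field_simp
  have hrnℓ := LinearMap.finrank_range_add_finrank_ker ℓ
  rw [hℓsurj, hpi] at hrnℓ
  have hdimtop : finrank ℝ (⊤ : Submodule ℝ ℝ) = 1 := by simp
  have hdimkerℓ : finrank ℝ (LinearMap.ker ℓ) = n - 1 := by omega
  have hle : LinearMap.range (LMap p) ≤ LinearMap.ker ℓ := by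
    rintro x ⟨v, rfl⟩
    rw [LinearMap.mem_ker, hℓapp]
    exact sum_Lr p hsym v
  have heq : LinearMap.range (LMap p) = LinearMap.ker ℓ := by
    apply Submodule.eq_of_le_of_finrank_le hle
    rw [hdimkerℓ]
    rw [hpi, hdimker] at hrn
    omega
  -- target vector c
  set c : Fin n → ℝ := fun i => 1 + (if i = q then -(n : ℝ) else 0) with hc
  have hcmem : c ∈ LinearMap.ker ℓ := by
    rw [LinearMap.mem_ker, hℓapp, hc]
    rw [Finset.sum_add_distrib]
    simp [Finset.sum_ite_eq']
  rw [← heq] at hcmem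
  obtain ⟨b0, hb0⟩ := hcmem
  -- rounding
  set Mt : ℝ := ∑ i, ∑ j, |lap p i j| with hMt
  have hMt0 : 0 ≤ Mt := Finset.sum_nonneg fun i _ => Finset.sum_nonneg fun j _ => abs_nonneg _
  obtain ⟨N, hN⟩ := exists_nat_gt Mt
  have hN0 : (0 : ℝ) < N := lt_of_le_of_lt hMt0 hN
  set f1 : Fin n → ℝ := fun j => ((round ((N : ℝ) * b0 j) : ℤ) : ℝ) with hf1
  set f2 : Fin n → ℝ := fun j => (N : ℝ) * b0 j with hf2
  refine ⟨fun j => round ((N : ℝ) * b0 j), ?_⟩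
  intro i hi
  have hLf1 : Lr p (fun j => ((fun j => round ((N : ℝ) * b0 j)) j : ℝ)) i = Lr p f1 i := rfl
  rw [hLf1]
  have hsplit : Lr p f1 i = Lr p f2 i + Lr p (f1 - f2) i := by
    rw [Lr_sub]; ring
  have hmain : Lr p f2 i = (N : ℝ) := by
    have hsm : Lr p f2 i = (N : ℝ) * Lr p b0 i := by
      unfold Lr
      rw [Finset.mul_sum]
      exact Finset.sum_congr rfl fun j _ => by simp [hf2]; ring
    have hb0i : Lr p b0 i = c i := by
      have : LMap p b0 = c := hb0
      exact congrFun this i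
    rw [hsm, hb0i, hc]
    simp [hi]
  have herr : |Lr p (f1 - f2) i| ≤ Mt / 2 := by
    unfold Lr
    calc |∑ j, (f1 - f2) j * lap p i j|
        ≤ ∑ j, |(f1 - f2) j * lap p i j| := Finset.abs_sum_le_sum_abs _ _
      _ ≤ ∑ j, (1 / 2) * |lap p i j| := by
          apply Finset.sum_le_sum
          intro j _
          rw [abs_mul]
          apply mul_le_mul_of_nonneg_right _ (abs_nonneg _)
          have : (f1 - f2) j = ((round ((N : ℝ) * b0 j) : ℤ) : ℝ) - (N : ℝ) * b0 j := rfl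
          rw [this, abs_sub_comm]
          exact abs_sub_round _
      _ = (1 / 2) * ∑ j, |lap p i j| := by rw [Finset.mul_sum]
      _ ≤ Mt / 2 := by
          have : ∑ j, |lap p i j| ≤ Mt := by
            rw [hMt]
            exact Finset.single_le_sum (f := fun i => ∑ j, |lap p i j|)
              (fun i _ => Finset.sum_nonneg fun j _ => abs_nonneg _) (Finset.mem_univ i)
          linarith
  have h1 := (abs_le.mp herr).1
  rw [hsplit, hmain]
  have : Mt / 2 < N := by linarith
  linarith

end RR
namespace RR
variable {n : ℕ} (p : Fin n → Fin n → ℝ)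

/-- Existence of a `q`-reduced representative. -/
lemma reduced_exists (hn : 0 < n) (hsym : ∀ i j, p i j = p j i) (hnn : ∀ i j, 0 ≤ p i j)
    (hconn : ∀ i j : Fin n, Relation.ReflTransGen (fun a b => 0 < p a b) i j)
    (q : Fin n) (D : Fin n → ℝ) :
    ∃ m : Fin n → ℤ,
      (∀ i, i ≠ q → -1 < D i + Lr p (fun j => ((m j : ℤ) : ℝ)) i) ∧
      (∀ S : Finset (Fin n), S.Nonempty → S ⊆ Finset.univ.erase q →
        ∃ i ∈ S, D i + Lr p (fun j => ((m j : ℤ) : ℝ)) i ≤ (∑ j ∈ Finset.univ \ S, p i j) - 1) := by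
  obtain ⟨b, hb⟩ := exists_posvec p hn hsym hnn hconn q
  set bR : Fin n → ℝ := fun j => ((b j : ℤ) : ℝ) with hbR
  -- `b` attains strict minimum at `q`
  have hbq : ∀ i, i ≠ q → (b q : ℝ) < (b i : ℝ) := by
    by_contra hcon
    push_neg at hcon
    obtain ⟨i1, hi1, hle⟩ := hcon
    obtain ⟨i₀, hi₀mem, hi₀min⟩ := Finset.exists_min_image (Finset.univ.erase q)
      (fun i => (b i : ℝ)) ⟨i1, Finset.mem_erase.mpr ⟨hi1, Finset.mem_univ _⟩⟩
    have hi₀q : i₀ ≠ q := (Finset.mem_erase.mp hi₀mem).1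
    have hglob : ∀ j, (b i₀ : ℝ) ≤ (b j : ℝ) := by
      intro j
      rcases eq_or_ne j q with rfl | hjq
      · calc (b i₀ : ℝ) ≤ (b i1 : ℝ) :=
              hi₀min i1 (Finset.mem_erase.mpr ⟨hi1, Finset.mem_univ _⟩)
          _ ≤ (b j : ℝ) := hle
      · exact hi₀min j (Finset.mem_erase.mpr ⟨hjq, Finset.mem_univ _⟩)
    have hpos := hb i₀ hi₀q
    have hnonpos : Lr p bR i₀ ≤ 0 := by
      rw [Lr_alt]
      apply Finset.sum_nonpos
      intro j _
      have h1 := hnn i₀ j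
      have h2 := hglob j
      have : bR i₀ - bR j ≤ 0 := by simp only [hbR]; linarith
      nlinarith
    exact absurd hpos (not_lt.mpr hnonpos)
  -- positive threshold δ
  have hne : (Finset.univ : Finset (Fin n)).Nonempty := ⟨⟨0, hn⟩, Finset.mem_univ _⟩
  set g : Fin n → ℝ := fun i => if i = q then 1 else Lr p bR i with hg
  set δ : ℝ := Finset.univ.inf' hne g with hδ
  have hδpos : 0 < δ := by
    rw [hδ, Finset.lt_inf'_iff]
    intro i _
    rcases eq_or_ne i q with rfl | hiq
    · simp [hg]
    · simpa [hg, hiq] using hb i hiq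
  have hδle : ∀ i, i ≠ q → δ ≤ Lr p bR i := by
    intro i hiq
    have h1 : δ ≤ g i := Finset.inf'_le g (Finset.mem_univ i)
    simpa only [hg, if_neg hiq] using h1
  -- the admissible set A
  set A : Set (Fin n → ℤ) := {m | ∀ i, i ≠ q → -1 < D i + Lr p (fun j => ((m j : ℤ) : ℝ)) i}
    with hA
  -- A is nonempty
  have hAne : A.Nonempty := by
    set t : ℝ := Finset.univ.sup' hne (fun i => if i = q then 0 else (-1 - D i) / Lr p bR i)
      with ht
    obtain ⟨M, hM⟩ := exists_nat_gt t
    refine ⟨fun j => (M : ℤ) * b j, ?_⟩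
    intro i hiq
    have hcast : (fun j => (((M : ℤ) * b j : ℤ) : ℝ)) = fun j => (M : ℝ) * bR j := by
      funext j; push_cast [hbR]; ring
    rw [hcast]
    have hsm : Lr p (fun j => (M : ℝ) * bR j) i = (M : ℝ) * Lr p bR i := by
      unfold Lr
      rw [Finset.mul_sum]
      exact Finset.sum_congr rfl fun j _ => by ring
    rw [hsm]
    have hposi := hb i hiq
    have hti : (-1 - D i) / Lr p bR i ≤ t := by
      rw [ht]
      have := Finset.le_sup' (f := fun i => if i = q then 0 else (-1 - D i) / Lr p bR i)
        (Finset.mem_univ i)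
      simpa [hiq, -Finset.le_sup'_iff] using this
    have : (-1 - D i) / Lr p bR i < M := lt_of_le_of_lt hti hM
    rw [div_lt_iff₀ hposi] at this
    linarith
  -- the potential Φ
  set Φ : (Fin n → ℤ) → ℝ := fun m => ∑ i, bR i * (D i + Lr p (fun j => ((m j : ℤ) : ℝ)) i)
    with hΦ
  set Vals : Set ℝ := Φ '' A with hVals
  have hValsne : Vals.Nonempty := hAne.image Φ
  -- bounded below
  have hbdd : BddBelow Vals := by
    refine ⟨bR q * (∑ i, D i) - ∑ i, (bR i - bR q), ?_⟩
    rintro v ⟨m, hm, rfl⟩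
    set x : Fin n → ℝ := fun i => D i + Lr p (fun j => ((m j : ℤ) : ℝ)) i with hx
    have hsx : ∑ i, x i = ∑ i, D i := by
      rw [hx]
      rw [Finset.sum_add_distrib, sum_Lr p hsym, add_zero]
    have hsplit : Φ m = bR q * (∑ i, x i) + ∑ i, (bR i - bR q) * x i := by
      rw [hΦ, Finset.mul_sum, ← Finset.sum_add_distrib]
      exact Finset.sum_congr rfl fun i _ => by ring
    rw [hsplit, hsx]
    have hterm : ∀ i ∈ Finset.univ, -(bR i - bR q) ≤ (bR i - bR q) * x i := by
      intro i _
      rcases eq_or_ne i q with rfl | hiq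
      · simp
      · have h1 : 0 < bR i - bR q := by have := hbq i hiq; simp only [hbR]; linarith
        have h2 : -1 < x i := hm i hiq
        nlinarith
    have := Finset.sum_le_sum hterm
    simp only [Finset.sum_neg_distrib] at this
    linarith [this]
  -- pick an almost-minimizer
  have hlt : sInf Vals < sInf Vals + δ := lt_add_of_pos_right _ hδpos
  obtain ⟨v, ⟨m, hmA, hvm⟩, hvlt⟩ := exists_lt_of_csInf_lt hValsne hlt
  refine ⟨m, hmA, ?_⟩
  by_contra hcon
  push_neg at hcon
  obtain ⟨S, hSne, hSsub, hSviol⟩ := hcon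
  set x : Fin n → ℝ := fun i => D i + Lr p (fun j => ((m j : ℤ) : ℝ)) i with hx
  set indS : Fin n → ℝ := fun j => if j ∈ S then 1 else 0 with hindS
  set m' : Fin n → ℤ := fun j => m j - (if j ∈ S then 1 else 0) with hm'
  have hcast' : (fun j => ((m' j : ℤ) : ℝ)) = (fun j => ((m j : ℤ) : ℝ)) - indS := by
    funext j
    simp only [hm', hindS, Pi.sub_apply]
    push_cast [apply_ite]
    ring_nf
    by_cases hj : j ∈ S <;> simp [hj]
  have hLr' : ∀ i, Lr p (fun j => ((m' j : ℤ) : ℝ)) i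
      = Lr p (fun j => ((m j : ℤ) : ℝ)) i - Lr p indS i := by
    intro i
    rw [hcast', Lr_sub]
  have hLin : ∀ i ∈ S, Lr p indS i = ∑ j ∈ Finset.univ \ S, p i j := by
    intro i hiS
    rw [Lr_alt]
    have hterm : ∀ j ∈ Finset.univ, p i j * (indS i - indS j)
        = if j ∈ Finset.univ \ S then p i j else 0 := by
      intro j _
      by_cases hj : j ∈ S <;> simp [hindS, hiS, hj, Finset.mem_sdiff]
    rw [Finset.sum_congr rfl hterm, Finset.sum_ite_mem, Finset.univ_inter]
  have hLout : ∀ i, i ∉ S → Lr p indS i ≤ 0 := by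
    intro i hiS
    rw [Lr_alt]
    apply Finset.sum_nonpos
    intro j _
    by_cases hj : j ∈ S
    · simp only [hindS, hiS, hj, if_true, if_false]
      have := hnn i j
      nlinarith
    · simp [hindS, hiS, hj]
  have hm'A : m' ∈ A := by
    intro i hiq
    rw [hLr' i]
    by_cases hiS : i ∈ S
    · have hviol := hSviol i hiS
      have := hLin i hiS
      show -1 < D i + (Lr p (fun j => ((m j : ℤ) : ℝ)) i - Lr p indS i)
      rw [this]
      have : -1 < x i - (∑ j ∈ Finset.univ \ S, p i j) := by
        simp only [hx] at hviol ⊢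
        linarith
      simp only [hx] at this
      linarith
    · have := hLout i hiS
      have hmi := hmA i hiq
      show -1 < D i + (Lr p (fun j => ((m j : ℤ) : ℝ)) i - Lr p indS i)
      linarith
  -- Φ decreases by at least δ
  have hdec : Φ m' ≤ Φ m - δ := by
    have h1 : Φ m' = Φ m - ∑ i, bR i * Lr p indS i := by
      rw [hΦ]
      simp only [hLr']
      rw [← Finset.sum_sub_distrib]
      exact Finset.sum_congr rfl fun i _ => by ring
    have h2 : ∑ i, bR i * Lr p indS i = ∑ i, indS i * Lr p bR i :=
      bilin_symm p hsym bR indS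
    have h3 : ∑ i, indS i * Lr p bR i = ∑ i ∈ S, Lr p bR i := by
      have : ∀ i ∈ Finset.univ, indS i * Lr p bR i = if i ∈ S then Lr p bR i else 0 := by
        intro i _
        by_cases hi : i ∈ S <;> simp [hindS, hi]
      rw [Finset.sum_congr rfl this, Finset.sum_ite_mem, Finset.univ_inter]
    have h4 : δ ≤ ∑ i ∈ S, Lr p bR i := by
      obtain ⟨i1, hi1⟩ := hSne
      have hi1q : i1 ≠ q := (Finset.mem_erase.mp (hSsub hi1)).1
      calc δ ≤ Lr p bR i1 := hδle i1 hi1q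
        _ ≤ ∑ i ∈ S, Lr p bR i := by
            apply Finset.single_le_sum (f := fun i => Lr p bR i) _ hi1
            intro i hiS
            have hiq : i ≠ q := (Finset.mem_erase.mp (hSsub hiS)).1
            exact le_of_lt (hb i hiq)
    rw [h1, h2, h3]
    linarith
  have hmem : Φ m' ∈ Vals := ⟨m', hm'A, rfl⟩
  have hge : sInf Vals ≤ Φ m' := csInf_le hbdd hmem
  rw [← hvm] at hvlt
  linarith
end RR
namespace RR
variable {n : ℕ} (p : Fin n → Fin n → ℝ)

/-- The divisor attached to a linear order (given by rank function `r`). -/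
noncomputable def nu (r : Fin n → ℕ) : Fin n → ℝ :=
  fun i => (∑ j ∈ Finset.univ.filter (fun j => r j < r i), p i j) - 1

lemma mem_take_iff {α : Type*} [DecidableEq α] :
    ∀ (L : List α) (k : ℕ) (j : α), j ∈ L.take k ↔ j ∈ L ∧ L.idxOf j < k := by
  intro L
  induction L with
  | nil => simp
  | cons a t ih =>
    intro k j
    cases k with
    | zero => simp
    | succ k =>
      rw [List.take_succ_cons]
      by_cases hj : j = a
      · subst hj
        simp [List.idxOf_cons_self]
      · simp only [List.mem_cons, hj, false_or]
        rw [List.idxOf_cons_ne t (fun h => hj h.symm), ih]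
        exact and_congr_right fun _ => by omega

lemma dhar (q : Fin n) (x : Fin n → ℝ)
    (hii : ∀ S : Finset (Fin n), S.Nonempty → S ⊆ Finset.univ.erase q →
       ∃ i ∈ S, x i ≤ (∑ j ∈ Finset.univ \ S, p i j) - 1) :
    ∀ S : Finset (Fin n), S ⊆ Finset.univ.erase q →
      ∃ l : List (Fin n), l.Nodup ∧ l.toFinset = S ∧
        ∀ i ∈ l, x i ≤ (∑ j ∈ (Finset.univ \ S) ∪ (l.take (l.idxOf i)).toFinset, p i j) - 1 := by
  intro S
  induction S using Finset.strongInduction with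
  | _ S ih =>
    intro hS
    rcases S.eq_empty_or_nonempty with rfl | hSne
    · exact ⟨[], by simp, by simp, by simp⟩
    · obtain ⟨i₀, hi₀S, hi₀⟩ := hii S hSne hS
      obtain ⟨l', hnd, htf, hprop⟩ := ih (S.erase i₀) (Finset.erase_ssubset hi₀S)
        ((S.erase_subset i₀).trans hS)
      have hi₀l' : i₀ ∉ l' := by
        rw [← List.mem_toFinset, htf]; exact Finset.notMem_erase i₀ S
      refine ⟨i₀ :: l', by simp [List.nodup_cons, hi₀l', hnd],
        by rw [List.toFinset_cons, htf, Finset.insert_erase hi₀S], ?_⟩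
      intro i hi
      rcases List.mem_cons.mp hi with rfl | hil'
      · rw [List.idxOf_cons_self]
        simpa using hi₀
      · have hne' : i ≠ i₀ := fun h => hi₀l' (h ▸ hil')
        rw [List.idxOf_cons_ne l' (fun h => hne' h.symm)]
        show x i ≤ (∑ j ∈ (Finset.univ \ S) ∪ (List.take ((l'.idxOf i) + 1) (i₀ :: l')).toFinset, p i j) - 1
        rw [List.take_succ_cons, List.toFinset_cons]
        have hset : (Finset.univ \ S) ∪ insert i₀ ((l'.take (l'.idxOf i)).toFinset)
            = (Finset.univ \ S.erase i₀) ∪ (l'.take (l'.idxOf i)).toFinset := by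
          ext j
          simp only [Finset.mem_union, Finset.mem_sdiff, Finset.mem_univ, true_and,
            Finset.mem_insert, Finset.mem_erase]
          by_cases hj : j = i₀
          · subst hj; tauto
          · tauto
        rw [hset]
        exact hprop i hil'

lemma exists_order (q : Fin n) (x : Fin n → ℝ) (hq : x q ≤ -1)
    (hii : ∀ S : Finset (Fin n), S.Nonempty → S ⊆ Finset.univ.erase q →
       ∃ i ∈ S, x i ≤ (∑ j ∈ Finset.univ \ S, p i j) - 1) :
    ∃ r : Fin n → ℕ, Function.Injective r ∧ (∀ i, r i < n) ∧ (∀ i, x i ≤ nu p r i) := by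
  obtain ⟨l, hnd, htf, hprop⟩ := dhar p q x hii (Finset.univ.erase q) (subset_refl _)
  set L : List (Fin n) := q :: l with hL
  have hqnotl : q ∉ l := by
    rw [← List.mem_toFinset, htf]; exact Finset.notMem_erase q _
  have hLnd : L.Nodup := by simp [hL, List.nodup_cons, hqnotl, hnd]
  have hLtf : L.toFinset = Finset.univ := by
    rw [hL, List.toFinset_cons, htf, Finset.insert_erase (Finset.mem_univ q)]
  have hmemL : ∀ i, i ∈ L := fun i => by
    rw [← List.mem_toFinset, hLtf]; exact Finset.mem_univ i
  have hLlen : L.length = n := by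
    rw [← List.toFinset_card_of_nodup hLnd, hLtf]; simp
  refine ⟨fun i => L.idxOf i, ?_, ?_, ?_⟩
  · intro i j h
    exact (List.idxOf_inj (hmemL i)).mp h
  · intro i
    exact lt_of_lt_of_le (List.idxOf_lt_length_iff.mpr (hmemL i)) (le_of_eq hLlen)
  · intro i
    have hfilter : Finset.univ.filter (fun j => L.idxOf j < L.idxOf i)
        = (L.take (L.idxOf i)).toFinset := by
      ext j
      simp only [Finset.mem_filter, Finset.mem_univ, true_and, List.mem_toFinset]
      rw [mem_take_iff]
      simp [hmemL j]
    rcases eq_or_ne i q with rfl | hiq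
    · unfold nu
      rw [hfilter]
      have h0 : L.idxOf i = 0 := by rw [hL]; exact List.idxOf_cons_self
      rw [h0]
      simpa using hq
    · have hil : i ∈ l := by
        have := hmemL i
        rw [hL, List.mem_cons] at this
        tauto
      unfold nu
      rw [hfilter]
      have h1 : L.idxOf i = (l.idxOf i) + 1 := by
        rw [hL, List.idxOf_cons_ne l (fun h => hiq h.symm)]
      rw [h1]
      show x i ≤ (∑ j ∈ (List.take ((l.idxOf i) + 1) (q :: l)).toFinset, p i j) - 1
      rw [List.take_succ_cons, List.toFinset_cons]
      have hset : insert q ((l.take (l.idxOf i)).toFinset)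
          = (Finset.univ \ Finset.univ.erase q) ∪ (l.take (l.idxOf i)).toFinset := by
        have hq1 : Finset.univ \ Finset.univ.erase q = {q} := by
          ext j
          simp only [Finset.mem_sdiff, Finset.mem_univ, true_and, Finset.mem_erase,
            Finset.mem_singleton]
          tauto
        rw [hq1, ← Finset.insert_eq]
      rw [hset]
      exact hprop i hil
end RR
namespace RR
variable {n : ℕ} (p : Fin n → Fin n → ℝ)

/-- total weight -/
noncomputable def W : ℝ := ∑ ij ∈ (Finset.univ : Finset (Fin n × Fin n)), p ij.1 ij.2

lemma swap_sum (hsym : ∀ i j, p i j = p j i) (P : Fin n × Fin n → Prop) [DecidablePred P] :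
    ∑ ij ∈ Finset.univ.filter P, p ij.1 ij.2
      = ∑ ij ∈ Finset.univ.filter (fun ij : Fin n × Fin n => P (ij.2, ij.1)), p ij.1 ij.2 := by
  apply Finset.sum_equiv (Equiv.prodComm (Fin n) (Fin n))
  · intro ij
    simp only [Finset.mem_filter, Finset.mem_univ, true_and, Equiv.prodComm_apply,
      Prod.snd_swap, Prod.fst_swap]
  · intro ij _
    simp only [Equiv.prodComm_apply, Prod.snd_swap, Prod.fst_swap]
    exact hsym ij.1 ij.2

lemma half_sum (hsym : ∀ i j, p i j = p j i) (hloop : ∀ i, p i i = 0)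
    (r : Fin n → ℕ) (hr : Function.Injective r) :
    2 * (∑ ij ∈ Finset.univ.filter (fun ij : Fin n × Fin n => r ij.2 < r ij.1), p ij.1 ij.2)
      = W p := by
  set Q : Fin n × Fin n → Prop := fun ij => r ij.2 < r ij.1 with hQ
  have hpart : (∑ ij ∈ Finset.univ.filter Q, p ij.1 ij.2)
      + (∑ ij ∈ Finset.univ.filter (fun ij => ¬ Q ij), p ij.1 ij.2) = W p :=
    Finset.sum_filter_add_sum_filter_not _ _ _
  have hsplit2 : (∑ ij ∈ Finset.univ.filter (fun ij => ¬ Q ij), p ij.1 ij.2)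
      = ∑ ij ∈ Finset.univ.filter (fun ij : Fin n × Fin n => r ij.1 < r ij.2), p ij.1 ij.2 := by
    rw [← Finset.sum_filter_add_sum_filter_not (Finset.univ.filter (fun ij => ¬ Q ij))
      (fun ij : Fin n × Fin n => r ij.1 < r ij.2)]
    have hz : (∑ ij ∈ (Finset.univ.filter (fun ij => ¬ Q ij)).filter
        (fun ij : Fin n × Fin n => ¬ r ij.1 < r ij.2), p ij.1 ij.2) = 0 := by
      apply Finset.sum_eq_zero
      intro ij hij
      simp only [Finset.mem_filter, hQ] at hij
      have : r ij.1 = r ij.2 := by omega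
      have : ij.1 = ij.2 := hr this
      rw [this]
      exact hloop _
    have hf : (Finset.univ.filter (fun ij => ¬ Q ij)).filter
        (fun ij : Fin n × Fin n => r ij.1 < r ij.2)
        = Finset.univ.filter (fun ij : Fin n × Fin n => r ij.1 < r ij.2) := by
      rw [Finset.filter_filter]
      apply Finset.filter_congr
      intro ij _
      simp only [hQ]
      constructor
      · tauto
      · intro h; exact ⟨by omega, h⟩
    rw [hz, hf, add_zero]
  have hswap : (∑ ij ∈ Finset.univ.filter Q, p ij.1 ij.2)
      = ∑ ij ∈ Finset.univ.filter (fun ij : Fin n × Fin n => r ij.1 < r ij.2), p ij.1 ij.2 := by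
    rw [swap_sum p hsym Q]
  rw [hswap] at hpart
  rw [hsplit2] at hpart
  rw [hswap]
  linarith

lemma genus_half (hsym : ∀ i j, p i j = p j i) (hloop : ∀ i, p i i = 0) :
    2 * (∑ ij ∈ Finset.univ.filter (fun ij : Fin n × Fin n => ij.1 < ij.2), p ij.1 ij.2)
      = W p := by
  have hinj : Function.Injective (fun i : Fin n => n - 1 - (i : ℕ)) := by
    intro i j h
    simp only at h
    have hi := i.isLt
    have hj := j.isLt
    exact Fin.ext (by omega)
  have h := half_sum p hsym hloop (fun i => n - 1 - (i : ℕ)) hinj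
  rw [← h]
  have hfe : (Finset.univ.filter (fun ij : Fin n × Fin n => ij.1 < ij.2))
      = Finset.univ.filter (fun ij : Fin n × Fin n =>
          (fun i : Fin n => n - 1 - (i : ℕ)) ij.2 < (fun i : Fin n => n - 1 - (i : ℕ)) ij.1) := by
    apply Finset.filter_congr
    intro ij _
    have h1 := ij.1.isLt
    have h2 := ij.2.isLt
    rw [Fin.lt_def]
    simp only [eq_iff_iff]
    omega
  rw [hfe]

lemma nu_sum (hsym : ∀ i j, p i j = p j i) (hloop : ∀ i, p i i = 0)
    (r : Fin n → ℕ) (hr : Function.Injective r) :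
    ∑ i, nu p r i = genus p - 1 := by
  simp only [nu]
  rw [Finset.sum_sub_distrib]
  have hW : ∑ i, ∑ j ∈ Finset.univ.filter (fun j => r j < r i), p i j
      = ∑ ij ∈ Finset.univ.filter (fun ij : Fin n × Fin n => r ij.2 < r ij.1), p ij.1 ij.2 := by
    rw [Finset.sum_filter]
    rw [Fintype.sum_prod_type]
    apply Finset.sum_congr rfl
    intro i _
    rw [Finset.sum_filter]
  have h1 := half_sum p hsym hloop r hr
  have h2 := genus_half p hsym hloop
  have hcard : (∑ _i : Fin n, (1 : ℝ)) = n := by simp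
  unfold genus
  rw [hW, hcard]
  linarith

lemma canon_sum (hsym : ∀ i j, p i j = p j i) (hloop : ∀ i, p i i = 0) :
    ∑ i, canon p i = 2 * genus p - 2 := by
  unfold canon
  rw [Finset.sum_sub_distrib]
  have h1 : ∀ i ∈ Finset.univ, (∑ j ∈ Finset.univ.erase i, p i j) = ∑ j, p i j := by
    intro i _
    exact Finset.sum_erase _ (hloop i)
  rw [Finset.sum_congr rfl h1]
  have hW : ∑ i, ∑ j, p i j = W p := by
    unfold W
    rw [Fintype.sum_prod_type]
  have h2 := genus_half p hsym hloop
  have hcard : (∑ _i : Fin n, (2 : ℝ)) = 2 * n := by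
    simp [Finset.sum_const, Finset.card_univ, mul_comm]
  unfold genus
  rw [hW, hcard]
  linarith

lemma nu_empty (hn : 0 < n) (hnn : ∀ i j, 0 ≤ p i j)
    (r : Fin n → ℕ) (hr : Function.Injective r) (m : Fin n → ℤ) :
    ∃ i, nu p r i + Lr p (fun j => ((m j : ℤ) : ℝ)) i ≤ -1 := by
  obtain ⟨i₀, -, hi₀⟩ := Finset.exists_min_image Finset.univ m
    ⟨⟨0, hn⟩, Finset.mem_univ _⟩
  set S : Finset (Fin n) := Finset.univ.filter (fun j => m j = m i₀) with hS
  obtain ⟨i₁, hi₁S, hi₁⟩ := Finset.exists_min_image S r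
    ⟨i₀, by simp [hS]⟩
  have hmi₁ : m i₁ = m i₀ := by
    have := hi₁S
    simp only [hS, Finset.mem_filter] at this
    exact this.2
  refine ⟨i₁, ?_⟩
  have hnu : nu p r i₁ ≤ (∑ j ∈ Finset.univ.filter (fun j => m j ≠ m i₀), p i₁ j) - 1 := by
    simp only [nu]
    have hsub : Finset.univ.filter (fun j => r j < r i₁)
        ⊆ Finset.univ.filter (fun j => m j ≠ m i₀) := by
      intro j hj
      simp only [Finset.mem_filter, Finset.mem_univ, true_and] at hj ⊢
      intro hmj
      have hjS : j ∈ S := by simp [hS, hmj]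
      have := hi₁ j hjS
      omega
    have := Finset.sum_le_sum_of_subset_of_nonneg hsub (fun j _ _ => hnn i₁ j)
    linarith
  have hLr : Lr p (fun j => ((m j : ℤ) : ℝ)) i₁
      ≤ -(∑ j ∈ Finset.univ.filter (fun j => m j ≠ m i₀), p i₁ j) := by
    rw [Lr_alt]
    rw [← Finset.sum_filter_add_sum_filter_not Finset.univ (fun j => m j ≠ m i₀)]
    have hz : (∑ j ∈ Finset.univ.filter (fun j => ¬ m j ≠ m i₀),
        p i₁ j * (((m i₁ : ℤ) : ℝ) - ((m j : ℤ) : ℝ))) = 0 := by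
      apply Finset.sum_eq_zero
      intro j hj
      simp only [Finset.mem_filter, not_not] at hj
      rw [hmi₁, hj.2]
      ring
    rw [hz, add_zero]
    rw [← Finset.sum_neg_distrib]
    apply Finset.sum_le_sum
    intro j hj
    simp only [Finset.mem_filter, Finset.mem_univ, true_and] at hj
    have hmj : m i₀ + 1 ≤ m j := by
      have := hi₀ j (Finset.mem_univ j)
      omega
    have hcast : ((m i₁ : ℤ) : ℝ) - ((m j : ℤ) : ℝ) ≤ -1 := by
      rw [hmi₁]
      have : ((m i₀ : ℤ) : ℝ) + 1 ≤ ((m j : ℤ) : ℝ) := by exact_mod_cast hmj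
      linarith
    have hp := hnn i₁ j
    nlinarith
  linarith

lemma rev_inj (r : Fin n → ℕ) (hr : Function.Injective r) (hrb : ∀ i, r i < n) :
    Function.Injective (fun i => n - 1 - r i) ∧ (∀ i, (n - 1 - r i) < n) := by
  constructor
  · intro i j h
    simp only at h
    have hi := hrb i
    have hj := hrb j
    have : r i = r j := by omega
    exact hr this
  · intro i
    have := hrb i
    omega

lemma canon_nu (hsym : ∀ i j, p i j = p j i) (hloop : ∀ i, p i i = 0)
    (r : Fin n → ℕ) (hr : Function.Injective r) (hrb : ∀ i, r i < n) (i : Fin n) :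
    canon p i - nu p r i = nu p (fun j => n - 1 - r j) i := by
  simp only [canon, nu]
  have hfe : Finset.univ.filter (fun j => n - 1 - r j < n - 1 - r i)
      = Finset.univ.filter (fun j => r i < r j) := by
    apply Finset.filter_congr
    intro j _
    have hi := hrb i
    have hj := hrb j
    omega
  rw [hfe]
  have herase : (∑ j ∈ Finset.univ.erase i, p i j) = ∑ j, p i j :=
    Finset.sum_erase _ (hloop i)
  have hsplit : (∑ j, p i j)
      = (∑ j ∈ Finset.univ.filter (fun j => r j < r i), p i j)
        + (∑ j ∈ Finset.univ.filter (fun j => r i < r j), p i j) := by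
    rw [← Finset.sum_filter_add_sum_filter_not Finset.univ (fun j => r j < r i)]
    congr 1
    rw [← Finset.sum_filter_add_sum_filter_not
      (Finset.univ.filter (fun j => ¬ r j < r i)) (fun j => r i < r j)]
    have hz : (∑ j ∈ (Finset.univ.filter (fun j => ¬ r j < r i)).filter
        (fun j => ¬ r i < r j), p i j) = 0 := by
      apply Finset.sum_eq_zero
      intro j hj
      simp only [Finset.mem_filter] at hj
      have : r j = r i := by omega
      rw [hr this]
      exact hloop i
    have hf : (Finset.univ.filter (fun j => ¬ r j < r i)).filter (fun j => r i < r j)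
        = Finset.univ.filter (fun j => r i < r j) := by
      rw [Finset.filter_filter]
      apply Finset.filter_congr
      intro j _
      omega
    rw [hz, hf, add_zero]
  rw [herase, hsplit]
  ring

end RR
namespace RR
variable {n : ℕ} (p : Fin n → Fin n → ℝ)

def hset (D : Fin n → ℝ) : Set ℝ :=
  {d : ℝ | ∃ E : Fin n → ℝ, (∀ i, 0 ≤ E i) ∧ ¬ LSNonempty p (D - E) ∧ d = ∑ i, E i}

lemma h0_eq (D : Fin n → ℝ) : h0 p D = sInf (hset p D) := rfl

lemma LS_def (X : Fin n → ℝ) :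
    LSNonempty p X ↔ ∃ m : Fin n → ℤ, ∀ i, -1 < X i + Lr p (fun j => ((m j : ℤ) : ℝ)) i :=
  Iff.rfl

lemma Lr_add (v w : Fin n → ℝ) (i : Fin n) :
    Lr p (v + w) i = Lr p v i + Lr p w i := by
  have := congrFun ((LMap p).map_add v w) i
  exact this

lemma hset_bddBelow (D : Fin n → ℝ) : BddBelow (hset p D) := by
  refine ⟨0, ?_⟩
  rintro d ⟨E, hE, -, rfl⟩
  exact Finset.sum_nonneg fun i _ => hE i

lemma hset_nonempty (hn : 0 < n) (hsym : ∀ i j, p i j = p j i) (D : Fin n → ℝ) :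
    (hset p D).Nonempty := by
  set t : ℝ := max 0 ((∑ i, D i) / n + 1) with ht
  set Et : Fin n → ℝ := fun _ => t with hEt
  refine ⟨∑ i, Et i, Et, fun i => le_max_left _ _, ?_, rfl⟩
  rw [LS_def]
  rintro ⟨m, hm⟩
  have hlt : ∑ _i : Fin n, (-1 : ℝ)
      < ∑ i, ((D - Et) i + Lr p (fun j => ((m j : ℤ) : ℝ)) i) := by
    apply Finset.sum_lt_sum_of_nonempty ⟨⟨0, hn⟩, Finset.mem_univ _⟩
    intro i _
    exact hm i
  have hsum : ∑ i, ((D - Et) i + Lr p (fun j => ((m j : ℤ) : ℝ)) i)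
      = (∑ i, D i) - n * t := by
    rw [Finset.sum_add_distrib, sum_Lr p hsym, add_zero]
    simp only [Pi.sub_apply, hEt]
    rw [Finset.sum_sub_distrib]
    simp [Finset.sum_const, Finset.card_univ, nsmul_eq_mul]
  have hconst : ∑ _i : Fin n, (-1 : ℝ) = -n := by
    simp [Finset.sum_const, Finset.card_univ]
  rw [hsum, hconst] at hlt
  have htge : (∑ i, D i) / n + 1 ≤ t := le_max_right _ _
  have hn' : (0 : ℝ) < n := by exact_mod_cast hn
  have : (∑ i, D i) + n ≤ n * t := by
    have hmul := mul_le_mul_of_nonneg_left htge (le_of_lt hn')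
    calc (∑ i, D i) + n = n * ((∑ i, D i) / n + 1) := by field_simp
      _ ≤ n * t := hmul
  linarith

lemma h0_nonneg (hn : 0 < n) (hsym : ∀ i j, p i j = p j i) (D : Fin n → ℝ) : 0 ≤ h0 p D := by
  rw [h0_eq]
  apply le_csInf (hset_nonempty p hn hsym D)
  rintro d ⟨E, hE, -, rfl⟩
  exact Finset.sum_nonneg fun i _ => hE i

lemma h0_mono (hn : 0 < n) (hsym : ∀ i j, p i j = p j i) (D1 D2 : Fin n → ℝ)
    (h : ∀ i, D1 i ≤ D2 i) : h0 p D1 ≤ h0 p D2 := by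
  rw [h0_eq, h0_eq]
  apply csInf_le_csInf (hset_bddBelow p D1) (hset_nonempty p hn hsym D2)
  rintro d ⟨E, hE, hLS, rfl⟩
  refine ⟨E, hE, ?_, rfl⟩
  rw [LS_def]
  rintro ⟨m, hm⟩
  apply hLS
  rw [LS_def]
  refine ⟨m, fun i => ?_⟩
  have h1 := hm i
  have h2 := h i
  simp only [Pi.sub_apply] at h1 ⊢
  linarith

/-- the key inequality: if `|D| = ∅` then `h⁰(K - D) ≤ g - 1 - deg D`. -/
lemma key (hn : 0 < n) (hsym : ∀ i j, p i j = p j i) (hnn : ∀ i j, 0 ≤ p i j)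
    (hloop : ∀ i, p i i = 0)
    (hconn : ∀ i j : Fin n, Relation.ReflTransGen (fun a b => 0 < p a b) i j)
    (D : Fin n → ℝ) (hD : ¬ LSNonempty p D) :
    h0 p (canon p - D) ≤ genus p - 1 - ∑ i, D i := by
  set q : Fin n := ⟨0, hn⟩ with hq
  obtain ⟨m, hmi, hmii⟩ := reduced_exists p hn hsym hnn hconn q D
  set x : Fin n → ℝ := fun i => D i + Lr p (fun j => ((m j : ℤ) : ℝ)) i with hx
  have hxq : x q ≤ -1 := by
    by_contra hcon
    push_neg at hcon
    apply hD
    rw [LS_def]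
    refine ⟨m, fun i => ?_⟩
    rcases eq_or_ne i q with rfl | hiq
    · exact hcon
    · exact hmi i hiq
  obtain ⟨r, hrinj, hrb, hxle⟩ := exists_order p q x hxq hmii
  set E : Fin n → ℝ := fun i => nu p r i - x i with hE
  have hE0 : ∀ i, 0 ≤ E i := by
    intro i
    have := hxle i
    simp only [hE]
    linarith
  have hsumx : ∑ i, x i = ∑ i, D i := by
    simp only [hx]
    rw [Finset.sum_add_distrib, sum_Lr p hsym, add_zero]
  have hsumE : ∑ i, E i = genus p - 1 - ∑ i, D i := by
    simp only [hE]
    rw [Finset.sum_sub_distrib, nu_sum p hsym hloop r hrinj, hsumx]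
  have hLS : ¬ LSNonempty p (canon p - D - E) := by
    rw [LS_def]
    rintro ⟨m', hm'⟩
    obtain ⟨hr'inj, hr'b⟩ := rev_inj r hrinj hrb
    obtain ⟨i, hi⟩ := nu_empty p hn hnn (fun j => n - 1 - r j) hr'inj (m + m')
    have hcast : (fun j => (((m + m') j : ℤ) : ℝ))
        = (fun j => ((m j : ℤ) : ℝ)) + (fun j => ((m' j : ℤ) : ℝ)) := by
      funext j
      simp only [Pi.add_apply]
      push_cast
      ring
    rw [hcast, Lr_add] at hi
    have hcn := canon_nu p hsym hloop r hrinj hrb i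
    have hxi : x i - D i = Lr p (fun j => ((m j : ℤ) : ℝ)) i := by simp [hx]
    have hgoal := hm' i
    simp only [Pi.sub_apply, hE] at hgoal
    -- hgoal : -1 < canon p i - D i - (nu p r i - x i) + Lr m' i
    -- hi : nu p r' i + (Lr m i + Lr m' i) ≤ -1
    -- hcn : canon p i - nu p r i = nu p r' i
    linarith [hgoal, hi, hcn, hxi]
  rw [h0_eq]
  exact csInf_le (hset_bddBelow p _) ⟨E, hE0, hLS, hsumE.symm⟩

lemma star (hn : 0 < n) (hsym : ∀ i j, p i j = p j i) (hnn : ∀ i j, 0 ≤ p i j)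
    (hloop : ∀ i, p i i = 0)
    (hconn : ∀ i j : Fin n, Relation.ReflTransGen (fun a b => 0 < p a b) i j)
    (D E : Fin n → ℝ) (hE : ∀ i, 0 ≤ E i) (h : ¬ LSNonempty p (D - E)) :
    h0 p (canon p - D) + (∑ i, D i) + 1 - genus p ≤ ∑ i, E i := by
  have h1 : h0 p (canon p - D) ≤ h0 p (canon p - (D - E)) := by
    apply h0_mono p hn hsym
    intro i
    simp only [Pi.sub_apply]
    have := hE i
    linarith
  have h2 : h0 p (canon p - (D - E)) ≤ genus p - 1 - ∑ i, (D - E) i :=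
    key p hn hsym hnn hloop hconn (D - E) h
  have h3 : ∑ i, (D - E) i = (∑ i, D i) - ∑ i, E i := by
    simp only [Pi.sub_apply]
    rw [Finset.sum_sub_distrib]
  rw [h3] at h2
  linarith

theorem main (hn : 0 < n) (hsym : ∀ i j, p i j = p j i) (hnn : ∀ i j, 0 ≤ p i j)
    (hloop : ∀ i, p i i = 0)
    (hconn : ∀ i j : Fin n, Relation.ReflTransGen (fun a b => 0 < p a b) i j)
    (D : Fin n → ℝ) :
    h0 p D - h0 p (canon p - D) = (∑ i, D i) + 1 - genus p := by
  have dagger : ∀ D0 : Fin n → ℝ,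
      h0 p (canon p - D0) + (∑ i, D0 i) + 1 - genus p ≤ h0 p D0 := by
    intro D0
    rw [h0_eq p D0]
    apply le_csInf (hset_nonempty p hn hsym D0)
    rintro d ⟨E, hE, hLS, rfl⟩
    exact star p hn hsym hnn hloop hconn D0 E hE hLS
  have h1 := dagger D
  have h2 := dagger (canon p - D)
  have hcc : canon p - (canon p - D) = D := by
    funext i
    simp only [Pi.sub_apply]
    ring
  rw [hcc] at h2
  have hcs : ∑ i, (canon p - D) i = 2 * genus p - 2 - ∑ i, D i := by
    simp only [Pi.sub_apply]
    rw [Finset.sum_sub_distrib, canon_sum p hsym hloop]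
  rw [hcs] at h2
  linarith

end RR

/-- Riemann–Roch for real divisors on connected edge-weighted graphs over ℝ:
`h⁰(D) - h⁰(K - D) = deg(D) + 1 - g`. -/
theorem stmt_18 {n : ℕ} (hn : 0 < n) (p : Fin n → Fin n → ℝ)
    (hsym : ∀ i j, p i j = p j i) (hnn : ∀ i j, 0 ≤ p i j) (hloop : ∀ i, p i i = 0)
    (hconn : ∀ i j : Fin n, Relation.ReflTransGen (fun a b => 0 < p a b) i j)
    (D : Fin n → ℝ) :
    h0 p D - h0 p (canon p - D) = (∑ i, D i) + 1 - genus p := by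
  exact RR.main p hn hsym hnn hloop hconn D
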